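/- Let I = max(0, Y - ξ) where Y ~ N(μ, σ²) with σ > 0. Then E[I] = σ·φ((μ-ξ)/σ) + (μ-ξ)·Φ((μ-ξ)/σ), where φ and Φ are the standard normal pdf and cdf. -/

import Mathlib

open MeasureTheory ProbabilityTheory Real

open Filter

open scoped NNReal ENNReal

/-- Standard normal pdf. -/
noncomputable def stdNormalPdf (z : ℝ) : ℝ := (1 / Real.sqrt (2 * Real.pi)) * Real.exp (-z ^ 2 / 2)

/-- Standard normal cdf. -/
noncomputable def stdNormalCdf (z : ℝ) : ℝ := ∫ u in Set.Iic z, stdNormalPdf u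


lemma pdf_eq : stdNormalPdf = gaussianPDFReal 0 1 := by
  funext z; simp [stdNormalPdf, gaussianPDFReal]

lemma pdf_int : Integrable stdNormalPdf := pdf_eq ▸ integrable_gaussianPDFReal 0 1

lemma pdf_nonneg (z : ℝ) : 0 ≤ stdNormalPdf z := pdf_eq ▸ gaussianPDFReal_nonneg 0 1 z

lemma pdf_even (z : ℝ) : stdNormalPdf (-z) = stdNormalPdf z := by
  simp [stdNormalPdf]

lemma pdf_deriv (z : ℝ) : HasDerivAt (fun z => -stdNormalPdf z) (z * stdNormalPdf z) z := by
  have h : HasDerivAt (fun z : ℝ => -z^2/2) (-z) z := by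
    have h2 := ((hasDerivAt_pow 2 z).neg.div_const 2)
    refine h2.congr_deriv ?_; push_cast; ring
  have h3 := ((h.exp).const_mul (1 / Real.sqrt (2 * Real.pi))).neg
  refine h3.congr_deriv ?_
  simp only [stdNormalPdf]; ring

lemma pdf_tendsto : Tendsto stdNormalPdf atTop (nhds 0) := by
  have h1 : Tendsto (fun z : ℝ => -z^2/2) atTop atBot := by
    apply Tendsto.atBot_div_const two_pos
    exact tendsto_neg_atTop_atBot.comp (tendsto_pow_atTop two_ne_zero)
  have h2 := (Real.tendsto_exp_atBot).comp h1
  have := h2.const_mul (1 / Real.sqrt (2 * Real.pi))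
  rw [show (0:ℝ) = (1 / Real.sqrt (2 * Real.pi)) * 0 by ring]
  exact this.congr (fun x => rfl)

lemma pdf_mul_int : Integrable (fun z => z * stdNormalPdf z) := by
  have := (integrable_mul_exp_neg_mul_sq (by norm_num : (0:ℝ) < 1/2)).const_mul
    (1 / Real.sqrt (2 * Real.pi))
  apply this.congr
  filter_upwards with z
  simp only [stdNormalPdf]; ring_nf

lemma int_z_pdf (c : ℝ) : ∫ z in Set.Ioi c, z * stdNormalPdf z = stdNormalPdf c := by
  have := integral_Ioi_of_hasDerivAt_of_tendsto' (f := fun z => -stdNormalPdf z)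
    (f' := fun z => z * stdNormalPdf z) (a := c) (m := 0)
    (fun x _ => pdf_deriv x) (pdf_mul_int.integrableOn) (by simpa using pdf_tendsto.neg)
  simpa using this



lemma int_pdf_Ioi (c : ℝ) : ∫ z in Set.Ioi c, stdNormalPdf z = stdNormalCdf (-c) := by
  rw [stdNormalCdf, ← integral_comp_neg_Ioi]
  exact setIntegral_congr_fun measurableSet_Ioi (fun x _ => (pdf_even x).symm)


/-- Closed form of the expected improvement: for `Y ~ N(μ, σ²)` with `σ > 0`,
`E[max(0, Y - ξ)] = σ φ((μ-ξ)/σ) + (μ-ξ) Φ((μ-ξ)/σ)`. -/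
theorem stmt_0 (μ ξ σ : ℝ) (hσ : 0 < σ) :
    ∫ y, max 0 (y - ξ) ∂(gaussianReal μ ⟨σ ^ 2, sq_nonneg σ⟩) =
      σ * stdNormalPdf ((μ - ξ) / σ) + (μ - ξ) * stdNormalCdf ((μ - ξ) / σ) := by
  set v : ℝ≥0 := ⟨σ ^ 2, sq_nonneg σ⟩ with hvdef
  have hv : v ≠ 0 := by
    rw [← NNReal.coe_ne_zero]
    exact (pow_pos hσ 2).ne'
  set g : ℝ → ℝ := fun x => gaussianPDFReal μ v x * max 0 (x - ξ) with hg
  have step1 : ∫ y, max 0 (y - ξ) ∂(gaussianReal μ v) = ∫ x, g x := by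
    rw [gaussianReal_of_var_ne_zero _ hv]
    rw [show gaussianPDF μ v = fun x => ((gaussianPDFReal μ v x).toNNReal : ℝ≥0∞) from rfl]
    rw [integral_withDensity_eq_integral_smul ((measurable_gaussianPDFReal μ v).real_toNNReal)]
    refine integral_congr_ae (Filter.Eventually.of_forall fun x => ?_)
    simp [g, NNReal.smul_def, Real.coe_toNNReal _ (gaussianPDFReal_nonneg μ v x)]
  have hcomp : ∀ z, g (σ * z + μ) = σ⁻¹ * (stdNormalPdf z * max 0 (σ * z + μ - ξ)) := by
    intro z
    have hvcoe : (v : ℝ) = σ ^ 2 := rfl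
    have hsq : Real.sqrt (2 * Real.pi * σ ^ 2) = Real.sqrt (2 * Real.pi) * σ := by
      rw [Real.sqrt_mul (by positivity), Real.sqrt_sq hσ.le]
    simp only [g, gaussianPDFReal, hvcoe, hsq, stdNormalPdf]
    rw [show σ * z + μ - μ = σ * z by ring]
    rw [mul_pow, show -(σ ^ 2 * z ^ 2) / (2 * σ ^ 2) = -z ^ 2 / 2 by
      field_simp]
    rw [mul_inv]
    ring
  have step2 : ∫ x, g x = ∫ z, stdNormalPdf z * max 0 (σ * z + μ - ξ) := by
    have h1 : ∫ z, g (σ * z + μ) = |σ⁻¹| • ∫ x, g (x + μ) :=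
      Measure.integral_comp_mul_left (fun x => g (x + μ)) σ
    rw [integral_add_right_eq_self g μ] at h1
    have h2 : ∫ z, g (σ * z + μ) = σ⁻¹ * ∫ z, stdNormalPdf z * max 0 (σ * z + μ - ξ) := by
      simp_rw [hcomp]
      exact integral_const_mul _ _
    rw [h2, abs_of_pos (inv_pos.mpr hσ), smul_eq_mul] at h1
    have := mul_left_cancel₀ (inv_ne_zero hσ.ne') h1.symm
    linarith [this]
  set c : ℝ := (ξ - μ) / σ with hc
  have step3 : ∫ z, stdNormalPdf z * max 0 (σ * z + μ - ξ)
      = ∫ z in Set.Ioi c, stdNormalPdf z * (σ * z + μ - ξ) := by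
    rw [← integral_indicator measurableSet_Ioi]
    refine integral_congr_ae ?_
    have hne : ∀ᵐ z : ℝ, z ≠ c := by
      refine ((Set.countable_singleton c).ae_notMem volume).mono ?_
      intro z hz; simpa using hz
    filter_upwards [hne] with z hz
    by_cases h : c < z
    · rw [Set.indicator_of_mem (Set.mem_Ioi.mpr h)]
      have : 0 ≤ σ * z + μ - ξ := by
        rw [hc, div_lt_iff₀ hσ] at h; linarith
      rw [max_eq_right this]
    · rw [Set.indicator_of_notMem (by simpa using h)]
      have hlt : z < c := lt_of_le_of_ne (not_lt.mp h) hz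
      have : σ * z + μ - ξ ≤ 0 := by
        rw [hc, lt_div_iff₀ hσ] at hlt; linarith
      rw [max_eq_left this, mul_zero]
  have step4 : ∫ z in Set.Ioi c, stdNormalPdf z * (σ * z + μ - ξ)
      = σ * stdNormalPdf ((μ - ξ) / σ) + (μ - ξ) * stdNormalCdf ((μ - ξ) / σ) := by
    have heq : ∀ z : ℝ, stdNormalPdf z * (σ * z + μ - ξ)
        = σ * (z * stdNormalPdf z) + (μ - ξ) * stdNormalPdf z := by intro z; ring
    simp_rw [heq]
    rw [integral_add ((pdf_mul_int.integrableOn).const_mul σ)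
      ((pdf_int.integrableOn).const_mul (μ - ξ)),
      integral_const_mul, integral_const_mul, int_z_pdf, int_pdf_Ioi]
    have hcneg : -c = (μ - ξ) / σ := by rw [hc]; ring
    rw [← hcneg, ← pdf_even c]
  rw [step1, step2, step3, step4]
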